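/- Fix a real s > 0. Then the proportion (1/N)·#{k ∈ ℤ : 1 ≤ k ≤ N − 1 and S_N(k/N, s) ≠ S_{N,ε_N,δ_N}(k/N, s)} tends to 0 as N → ∞. -/

import Mathlib

open scoped Classical

/-- `S N x0 s` counts the integers `1 ≤ n ≤ ⌊s·N⌋` whose fractional part of `√n`
lies in the arc `[x0 − 1/(2N), x0 + 1/(2N)) + ℤ`. -/
noncomputable def S (N : ℕ) (x0 s : ℝ) : ℕ :=
  ((Finset.Icc 1 ⌊s * (N : ℝ)⌋₊).filter (fun n : ℕ =>
    ∃ m : ℤ, -(1 / (2 * (N : ℝ))) ≤ Real.sqrt n - x0 + m ∧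
      Real.sqrt n - x0 + m < 1 / (2 * (N : ℝ)))).card

/-- `Sed N ε δ x0 s` counts the pairs `(m,n) ∈ ℤ²` with
`(x0 − m)/√N ∈ (−ε, √s + ε]` and `(√N·(n − (x0 − m)²) + δ)/((x0 − m)/√N) ∈ [−1, 1)`;
it is set to `0` when `x0 = 0`. -/
noncomputable def Sed (N : ℕ) (ε δ x0 s : ℝ) : ℕ :=
  if x0 = 0 then 0
  else
    Set.ncard {p : ℤ × ℤ |
      (x0 - (p.1 : ℝ)) / Real.sqrt N ∈ Set.Ioc (-ε) (Real.sqrt s + ε) ∧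
      (Real.sqrt N * ((p.2 : ℝ) - (x0 - (p.1 : ℝ)) ^ 2) + δ) /
          ((x0 - (p.1 : ℝ)) / Real.sqrt N) ∈ Set.Ico (-1 : ℝ) 1}

/-- `ε_N = 1/(2N·√⌊sN⌋) + |√⌊sN⌋/√N − √s|`. -/
noncomputable def epsN (N : ℕ) (s : ℝ) : ℝ :=
  1 / (2 * (N : ℝ) * Real.sqrt (⌊s * (N : ℝ)⌋₊ : ℝ)) +
    |Real.sqrt (⌊s * (N : ℝ)⌋₊ : ℝ) / Real.sqrt N - Real.sqrt s|

/-- `δ_N = −1/(4N·√N)`. -/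
noncomputable def deltaN (N : ℕ) : ℝ := -(1 / (4 * (N : ℝ) * Real.sqrt N))

noncomputable def UU (s : ℝ) (N : ℕ) : ℝ := (Real.sqrt s + epsN N s) * Real.sqrt N

lemma sqrtN_ge (N : ℕ) (hN : 4 ≤ N) : (2 : ℝ) ≤ Real.sqrt N := by
  have h4 : (4 : ℝ) ≤ (N : ℝ) := by exact_mod_cast hN
  nlinarith [Real.sq_sqrt (by linarith : (0:ℝ) ≤ (N:ℝ)), Real.sqrt_nonneg (N:ℝ)]

lemma sqrtM_ge (s : ℝ) (N : ℕ) (hM : 4 ≤ ⌊s * (N : ℝ)⌋₊) :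
    (2 : ℝ) ≤ Real.sqrt (⌊s * (N : ℝ)⌋₊ : ℝ) := by
  have h4 : (4 : ℝ) ≤ (⌊s * (N : ℝ)⌋₊ : ℝ) := by exact_mod_cast hM
  nlinarith [Real.sq_sqrt (by linarith : (0:ℝ) ≤ (⌊s * (N : ℝ)⌋₊ : ℝ)),
    Real.sqrt_nonneg (⌊s * (N : ℝ)⌋₊ : ℝ)]

lemma floor_le_sN (s : ℝ) (N : ℕ) (hs : 0 < s) : ((⌊s * (N : ℝ)⌋₊ : ℝ)) ≤ s * N :=
  Nat.floor_le (by positivity)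

lemma sN_lt_floor_add_one (s : ℝ) (N : ℕ) : s * N < (⌊s * (N : ℝ)⌋₊ : ℝ) + 1 := by
  have := Nat.lt_succ_floor (s * (N : ℝ))
  push_cast at this
  linarith

lemma sqrtM_le_sqrts_mul (s : ℝ) (N : ℕ) (hs : 0 < s) :
    Real.sqrt (⌊s * (N : ℝ)⌋₊ : ℝ) ≤ Real.sqrt s * Real.sqrt N := by
  rw [← Real.sqrt_mul hs.le]
  exact Real.sqrt_le_sqrt (floor_le_sN s N hs)

lemma sqrts_mul_le (s : ℝ) (N : ℕ) (hs : 0 < s) :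
    Real.sqrt s * Real.sqrt N ≤ Real.sqrt ((⌊s * (N : ℝ)⌋₊ : ℝ) + 1) := by
  rw [← Real.sqrt_mul hs.le]
  exact Real.sqrt_le_sqrt (sN_lt_floor_add_one s N).le

lemma sqrtM1_le (s : ℝ) (N : ℕ) (hM : 4 ≤ ⌊s * (N : ℝ)⌋₊) :
    Real.sqrt ((⌊s * (N : ℝ)⌋₊ : ℝ) + 1)
    ≤ Real.sqrt (⌊s * (N : ℝ)⌋₊ : ℝ) + 1 / (2 * Real.sqrt (⌊s * (N : ℝ)⌋₊ : ℝ)) := by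
  have h2 : (2 : ℝ) ≤ Real.sqrt (⌊s * (N : ℝ)⌋₊ : ℝ) := sqrtM_ge s N hM
  have hMnn : (0:ℝ) ≤ (⌊s * (N : ℝ)⌋₊ : ℝ) := by positivity
  have hsq := Real.sq_sqrt hMnn
  have hpos : (0:ℝ) < Real.sqrt (⌊s * (N : ℝ)⌋₊ : ℝ) := by linarith
  have hc : Real.sqrt (⌊s * (N : ℝ)⌋₊ : ℝ) * (1 / (2 * Real.sqrt (⌊s * (N : ℝ)⌋₊ : ℝ)))
      = 1/2 := by field_simp
  have key : Real.sqrt ((⌊s * (N : ℝ)⌋₊ : ℝ) + 1)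
      ≤ Real.sqrt ((Real.sqrt (⌊s * (N : ℝ)⌋₊ : ℝ)
        + 1 / (2 * Real.sqrt (⌊s * (N : ℝ)⌋₊ : ℝ)))^2) := by
    apply Real.sqrt_le_sqrt
    nlinarith [sq_nonneg (1 / (2 * Real.sqrt (⌊s * (N : ℝ)⌋₊ : ℝ)))]
  calc Real.sqrt ((⌊s * (N : ℝ)⌋₊ : ℝ) + 1) ≤ _ := key
    _ = _ := Real.sqrt_sq (by positivity)

lemma epsN_eq (s : ℝ) (N : ℕ) (hs : 0 < s) (hN : 4 ≤ N) :
    epsN N s = 1 / (2 * (N : ℝ) * Real.sqrt (⌊s * (N : ℝ)⌋₊ : ℝ))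
    + (Real.sqrt s - Real.sqrt (⌊s * (N : ℝ)⌋₊ : ℝ) / Real.sqrt N) := by
  have hsN : (0:ℝ) < Real.sqrt N := by nlinarith [sqrtN_ge N hN]
  have hle : Real.sqrt (⌊s * (N : ℝ)⌋₊ : ℝ) / Real.sqrt N ≤ Real.sqrt s := by
    rw [div_le_iff₀ hsN]
    exact sqrtM_le_sqrts_mul s N hs
  rw [epsN, abs_of_nonpos (by linarith), neg_sub]

lemma epsN_pos (s : ℝ) (N : ℕ) (hN : 4 ≤ N) (hM : 4 ≤ ⌊s * (N : ℝ)⌋₊) : 0 < epsN N s := by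
  have h2 := sqrtM_ge s N hM
  have h4 : (4 : ℝ) ≤ (N : ℝ) := by exact_mod_cast hN
  have h1 : (0:ℝ) < 1 / (2 * (N : ℝ) * Real.sqrt (⌊s * (N : ℝ)⌋₊ : ℝ)) := by positivity
  exact add_pos_of_pos_of_nonneg h1 (abs_nonneg _)

lemma UU_eq (s : ℝ) (N : ℕ) (hs : 0 < s) (hN : 4 ≤ N) (hM : 4 ≤ ⌊s * (N : ℝ)⌋₊) :
    UU s N = 2 * Real.sqrt s * Real.sqrt N - Real.sqrt (⌊s * (N : ℝ)⌋₊ : ℝ)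
    + 1 / (2 * Real.sqrt N * Real.sqrt (⌊s * (N : ℝ)⌋₊ : ℝ)) := by
  have hsN : (0:ℝ) < Real.sqrt N := by nlinarith [sqrtN_ge N hN]
  have hsM : (0:ℝ) < Real.sqrt (⌊s * (N : ℝ)⌋₊ : ℝ) := by nlinarith [sqrtM_ge s N hM]
  have hss : Real.sqrt N * Real.sqrt N = (N : ℝ) :=
    Real.mul_self_sqrt (by positivity)
  have e1 : 1 / (2 * (N : ℝ) * Real.sqrt (⌊s * (N : ℝ)⌋₊ : ℝ)) * Real.sqrt N
      = 1 / (2 * Real.sqrt N * Real.sqrt (⌊s * (N : ℝ)⌋₊ : ℝ)) := by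
    rw [div_mul_eq_mul_div, div_eq_div_iff (by positivity) (by positivity)]
    linear_combination 2 * Real.sqrt (⌊s * (N : ℝ)⌋₊ : ℝ) * hss
  have e2 : Real.sqrt (⌊s * (N : ℝ)⌋₊ : ℝ) / Real.sqrt N * Real.sqrt N
      = Real.sqrt (⌊s * (N : ℝ)⌋₊ : ℝ) := div_mul_cancel₀ _ hsN.ne'
  rw [UU, epsN_eq s N hs hN]
  linear_combination e1 - e2

lemma epsN_mul_sqrtN_le (s : ℝ) (N : ℕ) (hs : 0 < s) (hN : 4 ≤ N) (hM : 4 ≤ ⌊s * (N : ℝ)⌋₊) :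
    epsN N s * Real.sqrt N ≤ 3/8 := by
  have hsN2 : (2:ℝ) ≤ Real.sqrt N := sqrtN_ge N hN
  have hsM2 : (2:ℝ) ≤ Real.sqrt (⌊s * (N : ℝ)⌋₊ : ℝ) := sqrtM_ge s N hM
  have he : epsN N s * Real.sqrt N = UU s N - Real.sqrt s * Real.sqrt N := by
    rw [UU]; ring
  rw [he, UU_eq s N hs hN hM]
  have h1 : Real.sqrt s * Real.sqrt N ≤ Real.sqrt ((⌊s * (N : ℝ)⌋₊ : ℝ) + 1) :=
    sqrts_mul_le s N hs
  have h2 := sqrtM1_le s N hM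
  have h3 : 1 / (2 * Real.sqrt N * Real.sqrt (⌊s * (N : ℝ)⌋₊ : ℝ)) ≤ 1/8 := by
    rw [div_le_div_iff₀ (by positivity) (by norm_num)]
    nlinarith
  have h4 : 1 / (2 * Real.sqrt (⌊s * (N : ℝ)⌋₊ : ℝ)) ≤ 1/4 := by
    rw [div_le_div_iff₀ (by positivity) (by norm_num)]
    nlinarith
  nlinarith

lemma UU_ge (s : ℝ) (N : ℕ) (hs : 0 < s) (hN : 4 ≤ N) (hM : 4 ≤ ⌊s * (N : ℝ)⌋₊) :
    Real.sqrt (⌊s * (N : ℝ)⌋₊ : ℝ) ≤ UU s N := by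
  have hsN2 : (2:ℝ) ≤ Real.sqrt N := sqrtN_ge N hN
  have hsM2 : (2:ℝ) ≤ Real.sqrt (⌊s * (N : ℝ)⌋₊ : ℝ) := sqrtM_ge s N hM
  have h1 := sqrtM_le_sqrts_mul s N hs
  have h3 : (0:ℝ) < 1 / (2 * Real.sqrt N * Real.sqrt (⌊s * (N : ℝ)⌋₊ : ℝ)) := by positivity
  rw [UU_eq s N hs hN hM]
  linarith

lemma UU_le (s : ℝ) (N : ℕ) (hs : 0 < s) (hN : 4 ≤ N) (hM : 4 ≤ ⌊s * (N : ℝ)⌋₊) :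
    UU s N ≤ Real.sqrt (⌊s * (N : ℝ)⌋₊ : ℝ) + 1 / Real.sqrt (⌊s * (N : ℝ)⌋₊ : ℝ)
      + 1 / (2 * Real.sqrt N * Real.sqrt (⌊s * (N : ℝ)⌋₊ : ℝ)) := by
  have hsM2 : (2:ℝ) ≤ Real.sqrt (⌊s * (N : ℝ)⌋₊ : ℝ) := sqrtM_ge s N hM
  have h1 : Real.sqrt s * Real.sqrt N ≤ Real.sqrt ((⌊s * (N : ℝ)⌋₊ : ℝ) + 1) :=
    sqrts_mul_le s N hs
  have h2 := sqrtM1_le s N hM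
  rw [UU_eq s N hs hN hM]
  have : 2 * (1 / (2 * Real.sqrt (⌊s * (N : ℝ)⌋₊ : ℝ))) = 1 / Real.sqrt (⌊s * (N : ℝ)⌋₊ : ℝ) := by
    rw [mul_one_div, div_eq_div_iff (by positivity) (ne_of_gt (by linarith : (0:ℝ) < Real.sqrt (⌊s * (N : ℝ)⌋₊ : ℝ)))]
    ring
  linarith [this]

lemma ratio_mem_iff (N : ℕ) (hN : 0 < N) (y : ℝ) (hy : y ≠ 0) (nn : ℝ) :
    (Real.sqrt N * (nn - y ^ 2) + deltaN N) / (y / Real.sqrt N) ∈ Set.Ico (-1 : ℝ) 1 ↔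
    (if 0 < y then (y - 1 / (2 * (N : ℝ))) ^ 2 ≤ nn ∧ nn < (y + 1 / (2 * (N : ℝ))) ^ 2
     else (y + 1 / (2 * (N : ℝ))) ^ 2 < nn ∧ nn ≤ (y - 1 / (2 * (N : ℝ))) ^ 2) := by
  have hNR : (0 : ℝ) < N := by exact_mod_cast hN
  have hsN : (0 : ℝ) < Real.sqrt N := Real.sqrt_pos.2 hNR
  have hss : Real.sqrt N * Real.sqrt N = (N : ℝ) := Real.mul_self_sqrt hNR.le
  set A := Real.sqrt N * (nn - y ^ 2) + deltaN N with hA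
  have hAs : A * Real.sqrt N = (N : ℝ) * (nn - y ^ 2) - 1 / (4 * (N : ℝ)) := by
    have h4 : 1 / (4 * (N : ℝ) * Real.sqrt N) * Real.sqrt N = 1 / (4 * (N : ℝ)) := by
      rw [div_mul_eq_mul_div, mul_comm (4 * (N:ℝ)) (Real.sqrt N), ← div_div,
        one_mul, div_self hsN.ne']
    calc A * Real.sqrt N
        = Real.sqrt N * Real.sqrt N * (nn - y ^ 2)
          - 1 / (4 * (N : ℝ) * Real.sqrt N) * Real.sqrt N := by rw [hA, deltaN]; ring
      _ = (N : ℝ) * (nn - y ^ 2) - 1 / (4 * (N : ℝ)) := by rw [hss, h4]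
  have id1 : A * Real.sqrt N - y = (N : ℝ) * (nn - (y + 1 / (2 * (N : ℝ))) ^ 2) := by
    rw [hAs]; field_simp; ring
  have id2 : A * Real.sqrt N + y = (N : ℝ) * (nn - (y - 1 / (2 * (N : ℝ))) ^ 2) := by
    rw [hAs]; field_simp; ring
  have hNmul : ∀ x : ℝ, 0 < (N : ℝ) * x ↔ 0 < x := fun x =>
    ⟨fun h => by nlinarith, fun h => mul_pos hNR h⟩
  have hNmul' : ∀ x : ℝ, 0 ≤ (N : ℝ) * x ↔ 0 ≤ x := fun x =>
    ⟨fun h => by nlinarith, fun h => mul_nonneg hNR.le h⟩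
  have hNmuln : ∀ x : ℝ, (N : ℝ) * x < 0 ↔ x < 0 := fun x =>
    ⟨fun h => by nlinarith, fun h => mul_neg_of_pos_of_neg hNR h⟩
  rcases lt_or_gt_of_ne hy with hneg | hpos
  · have ht : y / Real.sqrt N < 0 := div_neg_of_neg_of_pos hneg hsN
    rw [if_neg (not_lt.2 hneg.le), Set.mem_Ico, le_div_iff_of_neg ht, div_lt_iff_of_neg ht]
    have e1 : (1 * (y / Real.sqrt N) < A) ↔ (y + 1 / (2 * (N : ℝ))) ^ 2 < nn := by
      rw [one_mul, div_lt_iff₀ hsN, ← sub_pos, id1, hNmul, sub_pos]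
    have e2 : (A ≤ -1 * (y / Real.sqrt N)) ↔ nn ≤ (y - 1 / (2 * (N : ℝ))) ^ 2 := by
      have id2' : -y - A * Real.sqrt N
          = (N : ℝ) * ((y - 1 / (2 * (N : ℝ))) ^ 2 - nn) := by linear_combination -id2
      rw [neg_one_mul, ← neg_div, le_div_iff₀ hsN, ← sub_nonneg, id2', hNmul', sub_nonneg]
    rw [e1, e2, and_comm]
  · have ht : 0 < y / Real.sqrt N := div_pos hpos hsN
    rw [if_pos hpos, Set.mem_Ico, le_div_iff₀ ht, div_lt_iff₀ ht]
    have e3 : (-1 * (y / Real.sqrt N) ≤ A) ↔ (y - 1 / (2 * (N : ℝ))) ^ 2 ≤ nn := by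
      rw [neg_one_mul, ← neg_div, div_le_iff₀ hsN, ← sub_nonneg]
      have : A * Real.sqrt N - -y = (N : ℝ) * (nn - (y - 1 / (2 * (N : ℝ))) ^ 2) := by
        linear_combination id2
      rw [this, hNmul', sub_nonneg]
    have e4 : (A < 1 * (y / Real.sqrt N)) ↔ nn < (y + 1 / (2 * (N : ℝ))) ^ 2 := by
      rw [one_mul, lt_div_iff₀ hsN, ← sub_neg, id1, hNmuln, sub_neg]
    rw [e3, e4]


noncomputable def AA (s : ℝ) (N : ℕ) : ℝ :=
  min (UU s N) (Real.sqrt ((⌊s * (N : ℝ)⌋₊ : ℝ) + 1) - 1 / (2 * (N : ℝ)))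

noncomputable def BB (s : ℝ) (N : ℕ) : ℝ :=
  max (UU s N) (Real.sqrt (⌊s * (N : ℝ)⌋₊ : ℝ) + 1 / (2 * (N : ℝ)))

def TS (s : ℝ) (N k : ℕ) : Set (ℤ × ℤ) :=
  {p | 1 ≤ p.2 ∧ p.2 ≤ (⌊s * (N : ℝ)⌋₊ : ℤ) ∧ 0 < (k : ℝ) / N - p.1 ∧
    (k : ℝ) / N - p.1 - 1 / (2 * (N : ℝ)) ≤ Real.sqrt p.2 ∧
    Real.sqrt p.2 < (k : ℝ) / N - p.1 + 1 / (2 * (N : ℝ))}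

def TE (s : ℝ) (N k : ℕ) : Set (ℤ × ℤ) :=
  {p | 1 ≤ p.2 ∧ (k : ℝ) / N - p.1 ≤ UU s N ∧ 0 < (k : ℝ) / N - p.1 ∧
    (k : ℝ) / N - p.1 - 1 / (2 * (N : ℝ)) ≤ Real.sqrt p.2 ∧
    Real.sqrt p.2 < (k : ℝ) / N - p.1 + 1 / (2 * (N : ℝ))}

lemma y_ne_zero (N k : ℕ) (hN : 0 < N) (hk1 : 1 ≤ k) (hkN : k < N) (m : ℤ) :
    (k : ℝ) / N - m ≠ 0 := by
  intro h
  have hNR : (0:ℝ) < N := by exact_mod_cast hN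
  field_simp at h
  have hZ : (k : ℤ) - N * m = 0 := by exact_mod_cast h
  have hk1' : (1 : ℤ) ≤ k := by exact_mod_cast hk1
  have hkN' : (k : ℤ) < N := by exact_mod_cast hkN
  have hN' : (0 : ℤ) < N := by exact_mod_cast hN
  rcases le_or_gt m 0 with hm | hm
  · nlinarith
  · nlinarith

lemma y_ne_half (N k : ℕ) (hN : 0 < N) (hk1 : 1 ≤ k) (hkN : k < N) (m : ℤ) :
    (k : ℝ) / N - m ≠ 1 / (2 * (N : ℝ)) := by
  intro h
  have hNR : (0:ℝ) < N := by exact_mod_cast hN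
  field_simp at h
  have hZ : ((k:ℤ) - N * m) * (2 * N) = N := by
    have hZ' : ((k:ℤ) - N * m) * 2 = 1 := by exact_mod_cast h
    linear_combination (N:ℤ) * hZ'
  have hN' : (0:ℤ) < N := by exact_mod_cast hN
  have h2 : (2 * ((k:ℤ) - N * m) - 1) * N = 0 := by linear_combination hZ
  rcases mul_eq_zero.1 h2 with h3 | h3
  · obtain ⟨j, hj⟩ : ∃ j : ℤ, j = (k:ℤ) - N * m := ⟨_, rfl⟩
    rw [← hj] at h3
    omega
  · omega

lemma Sed_eq (s : ℝ) (hs : 0 < s) (N k : ℕ) (hN : 4 ≤ N) (hM : 4 ≤ ⌊s * (N : ℝ)⌋₊)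
    (hk1 : 1 ≤ k) (hkN : k < N) :
    Sed N (epsN N s) (deltaN N) ((k : ℝ) / N) s = (TE s N k).ncard := by
  have hN0 : 0 < N := by omega
  have hNR : (0:ℝ) < N := by exact_mod_cast hN0
  have hsN : (0:ℝ) < Real.sqrt N := by nlinarith [sqrtN_ge N hN]
  have hx0 : ((k:ℝ)/N) ≠ 0 := by
    have : (0:ℝ) < (k:ℝ)/N := by
      apply div_pos _ hNR
      exact_mod_cast hk1
    exact this.ne'
  rw [Sed, if_neg hx0]
  congr 1
  ext p
  obtain ⟨m, n⟩ := p
  have hy0 := y_ne_zero N k hN0 hk1 hkN m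
  simp only [Set.mem_setOf_eq, Set.mem_Ioc, TE]
  rw [ratio_mem_iff N hN0 _ hy0 n]
  set y := (k : ℝ) / N - m with hy
  clear_value y
  constructor
  · rintro ⟨⟨hl, hr⟩, hsq⟩
    by_cases hyp : 0 < y
    · rw [if_pos hyp] at hsq
      obtain ⟨h1, h2⟩ := hsq
      have hn0 : (0:ℝ) ≤ (n:ℝ) := le_trans (sq_nonneg _) h1
      have hn0' : (0:ℤ) ≤ n := by exact_mod_cast hn0
      have hn1 : 1 ≤ n := by
        rcases lt_or_eq_of_le hn0' with h | h
        · omega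
        · exfalso
          rw [← h] at h1
          push_cast at h1
          have : (y - 1 / (2 * (N : ℝ))) ^ 2 = 0 := le_antisymm h1 (sq_nonneg _)
          have := pow_eq_zero_iff (n := 2) (by norm_num) |>.1 this
          exact y_ne_half N k hN0 hk1 hkN m (by linarith [sub_eq_zero.1 this])
      have hnn1 : (1:ℝ) ≤ (n:ℝ) := by exact_mod_cast hn1
      refine ⟨hn1, ?_, hyp, ?_, ?_⟩
      · have := (div_le_iff₀ hsN).1 hr
        rw [UU]
        exact this
      · calc y - 1 / (2 * (N : ℝ)) ≤ |y - 1 / (2 * (N : ℝ))| := le_abs_self _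
          _ = Real.sqrt ((y - 1 / (2 * (N : ℝ)))^2) := (Real.sqrt_sq_eq_abs _).symm
          _ ≤ Real.sqrt n := Real.sqrt_le_sqrt h1
      · exact (Real.sqrt_lt' (by positivity)).2 h2
    · rw [if_neg hyp] at hsq
      exfalso
      obtain ⟨h1, h2⟩ := hsq
      push_neg at hyp
      have hyneg : y < 0 := lt_of_le_of_ne hyp hy0
      have hyl : -(epsN N s * Real.sqrt N) < y := by
        have := (lt_div_iff₀ hsN).1 hl
        linarith
      have hn1 : (1:ℝ) ≤ (n:ℝ) := by
        have : (0:ℝ) < (n:ℝ) := lt_of_le_of_lt (sq_nonneg _) h1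
        have : (0:ℤ) < n := by exact_mod_cast this
        exact_mod_cast this
      have heps := epsN_mul_sqrtN_le s N hs hN hM
      have hhalf : 1 / (2 * (N : ℝ)) ≤ 1/8 := by
        rw [div_le_div_iff₀ (by positivity) (by norm_num)]
        have : (4:ℝ) ≤ (N:ℝ) := by exact_mod_cast hN
        linarith
      have h2N : (0:ℝ) < 1 / (2 * (N : ℝ)) := by positivity
      have hb1 : -(1/2 : ℝ) < y - 1 / (2 * (N : ℝ)) := by linarith
      have hb2 : y - 1 / (2 * (N : ℝ)) < 0 := sub_neg.mpr (lt_trans hyneg h2N)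
      have hq : (y - 1 / (2 * (N : ℝ)))^2 < 1/4 := by nlinarith
      linarith
  · rintro ⟨hn1, hyU, hyp, h1, h2⟩
    have hnn1 : (1:ℝ) ≤ (n:ℝ) := by exact_mod_cast hn1
    have hsqn : (1:ℝ) ≤ Real.sqrt n := by
      rw [show (1:ℝ) = Real.sqrt 1 from (Real.sqrt_one).symm]
      exact Real.sqrt_le_sqrt hnn1
    have heps := epsN_pos s N hN hM
    refine ⟨⟨?_, ?_⟩, ?_⟩
    · have : (0:ℝ) < y / Real.sqrt N := div_pos hyp hsN
      linarith
    · rw [div_le_iff₀ hsN]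
      exact hyU
    · rw [if_pos hyp]
      constructor
      · have habs : |y - 1 / (2 * (N : ℝ))| ≤ Real.sqrt n := by
          rcases le_or_gt y (1 / (2 * (N : ℝ))) with hc | hc
          · rw [abs_of_nonpos (by linarith)]
            have hN1 : (1:ℝ) ≤ (N:ℝ) := by exact_mod_cast hN0
            have : 1 / (2 * (N : ℝ)) ≤ 1 := by
              rw [div_le_one (by positivity)]
              linarith
            linarith
          · rw [abs_of_pos (by linarith)]
            exact h1
        calc (y - 1 / (2 * (N : ℝ)))^2 = |y - 1 / (2 * (N : ℝ))|^2 := (sq_abs _).symm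
          _ ≤ (Real.sqrt n)^2 := by
              apply pow_le_pow_left₀ (abs_nonneg _) habs
          _ = (n:ℝ) := Real.sq_sqrt (by linarith)
      · calc (n:ℝ) = (Real.sqrt n)^2 := (Real.sq_sqrt (by linarith)).symm
          _ < (y + 1 / (2 * (N : ℝ)))^2 := by
              apply pow_lt_pow_left₀ h2 (Real.sqrt_nonneg _)
              norm_num

lemma ceil_eq_m (N k : ℕ) (hN : 0 < N) (n : ℕ) (m : ℤ)
    (h1 : (k:ℝ)/N - m - 1/(2*(N:ℝ)) ≤ Real.sqrt n)
    (h2 : Real.sqrt n < (k:ℝ)/N - m + 1/(2*(N:ℝ))) :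
    ⌈(k:ℝ)/N - Real.sqrt n - 1/(2*(N:ℝ))⌉ = m := by
  have hNR : (1:ℝ) ≤ N := by exact_mod_cast hN
  have hhalf : 1/(2*(N:ℝ)) ≤ 1/2 := by
    rw [div_le_div_iff₀ (by positivity) (by norm_num)]
    linarith
  rw [Int.ceil_eq_iff]
  constructor
  · linarith
  · linarith

lemma S_eq (s : ℝ) (hs : 0 < s) (N k : ℕ) (hN : 4 ≤ N) (hM : 4 ≤ ⌊s * (N : ℝ)⌋₊)
    (hk1 : 1 ≤ k) (hkN : k < N) :
    S N ((k : ℝ) / N) s = (TS s N k).ncard := by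
  classical
  have hN0 : 0 < N := by omega
  have hNR : (0:ℝ) < N := by exact_mod_cast hN0
  set F := (Finset.Icc 1 ⌊s * (N : ℝ)⌋₊).filter (fun n : ℕ =>
    ∃ m : ℤ, -(1 / (2 * (N : ℝ))) ≤ Real.sqrt n - (k : ℝ) / N + m ∧
      Real.sqrt n - (k : ℝ) / N + m < 1 / (2 * (N : ℝ))) with hF
  have himg : TS s N k
      = (fun n : ℕ => (⌈(k:ℝ)/N - Real.sqrt n - 1/(2*(N:ℝ))⌉, (n:ℤ))) '' ↑F := by
    ext ⟨m, n⟩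
    simp only [TS, Set.mem_setOf_eq, Set.mem_image, Finset.mem_coe, hF,
      Finset.mem_filter, Finset.mem_Icc, Prod.mk.injEq]
    constructor
    · rintro ⟨hn1, hnM, hy, h1, h2⟩
      have hcast : ((n.toNat : ℕ) : ℝ) = (n:ℝ) := by
        have : ((n.toNat : ℕ) : ℤ) = n := Int.toNat_of_nonneg (by omega)
        exact_mod_cast congrArg (fun z : ℤ => (z:ℝ)) this
      refine ⟨n.toNat, ⟨⟨by omega, ?_⟩, ⟨m, ?_, ?_⟩⟩, ?_, by omega⟩
      · have : (n.toNat : ℤ) ≤ (⌊s * (N : ℝ)⌋₊ : ℤ) := by omega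
        exact_mod_cast this
      · rw [hcast]; linarith
      · rw [hcast]; linarith
      · exact ceil_eq_m N k hN0 n.toNat m (by rw [hcast]; linarith) (by rw [hcast]; linarith)
    · rintro ⟨n', ⟨⟨hn1, hnM⟩, ⟨m', hm1, hm2⟩⟩, heq1, heq2⟩
      have hy1 : (k:ℝ)/N - m' - 1/(2*(N:ℝ)) ≤ Real.sqrt n' := by linarith
      have hy2 : Real.sqrt n' < (k:ℝ)/N - m' + 1/(2*(N:ℝ)) := by linarith
      have hceil : ⌈(k:ℝ)/N - Real.sqrt n' - 1/(2*(N:ℝ))⌉ = m' :=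
        ceil_eq_m N k hN0 n' m' hy1 hy2
      have hmm : m = m' := by rw [← heq1, hceil]
      have hnn : (n : ℝ) = (n' : ℝ) := by exact_mod_cast heq2.symm
      have hsqrt1 : (1:ℝ) ≤ Real.sqrt n' := by
        rw [show (1:ℝ) = Real.sqrt 1 from (Real.sqrt_one).symm]
        exact Real.sqrt_le_sqrt (by exact_mod_cast hn1)
      have hy0 : 0 < (k:ℝ)/N - m := by
        rw [hmm]
        have hhalf : 1/(2*(N:ℝ)) ≤ 1/2 := by
          rw [div_le_div_iff₀ (by positivity) (by norm_num)]
          have : (1:ℝ) ≤ N := by exact_mod_cast hN0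
          linarith
        linarith
      refine ⟨by omega, ?_, hy0, ?_, ?_⟩
      · have : (n':ℤ) ≤ (⌊s * (N : ℝ)⌋₊ : ℤ) := by exact_mod_cast hnM
        omega
      · rw [hmm, show Real.sqrt (n:ℝ) = Real.sqrt (n':ℝ) from by rw [hnn]]
        linarith
      · rw [hmm, show Real.sqrt (n:ℝ) = Real.sqrt (n':ℝ) from by rw [hnn]]
        linarith
  have hinj : Set.InjOn (fun n : ℕ => (⌈(k:ℝ)/N - Real.sqrt n - 1/(2*(N:ℝ))⌉, (n:ℤ))) ↑F := by
    intro a _ b _ hab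
    have : (a : ℤ) = (b : ℤ) := congrArg Prod.snd hab
    exact_mod_cast this
  rw [himg, Set.ncard_image_of_injOn hinj, Set.ncard_coe_finset]
  rfl

lemma TS_eq_TE (s : ℝ) (hs : 0 < s) (N k : ℕ) (hN : 4 ≤ N) (hM : 4 ≤ ⌊s * (N : ℝ)⌋₊)
    (hk1 : 1 ≤ k) (hkN : k < N)
    (hgood : ∀ m : ℤ, ¬(AA s N < (k : ℝ) / N - m ∧ (k : ℝ) / N - m ≤ BB s N)) :
    TS s N k = TE s N k := by
  have hN0 : 0 < N := by omega
  have hNR : (0:ℝ) < N := by exact_mod_cast hN0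
  ext ⟨m, n⟩
  simp only [TS, TE, Set.mem_setOf_eq]
  constructor
  · rintro ⟨hn1, hnM, hy, h1, h2⟩
    have hnMR : (n:ℝ) ≤ (⌊s * (N : ℝ)⌋₊ : ℝ) := by exact_mod_cast hnM
    have hsqM : Real.sqrt n ≤ Real.sqrt (⌊s * (N : ℝ)⌋₊ : ℝ) := Real.sqrt_le_sqrt hnMR
    have hyB : (k:ℝ)/N - m ≤ BB s N := by
      have : (k:ℝ)/N - m ≤ Real.sqrt (⌊s * (N : ℝ)⌋₊ : ℝ) + 1/(2*(N:ℝ)) := by linarith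
      exact le_trans this (le_max_right _ _)
    refine ⟨hn1, ?_, hy, h1, h2⟩
    by_contra hyU
    push_neg at hyU
    exact hgood m ⟨lt_of_le_of_lt (min_le_left _ _) hyU, hyB⟩
  · rintro ⟨hn1, hyU, hy, h1, h2⟩
    refine ⟨hn1, ?_, hy, h1, h2⟩
    by_contra hnM
    push_neg at hnM
    have hnMR : (⌊s * (N : ℝ)⌋₊ : ℝ) + 1 ≤ (n:ℝ) := by
      have : (⌊s * (N : ℝ)⌋₊ : ℤ) + 1 ≤ n := hnM
      exact_mod_cast this
    have hsqM : Real.sqrt ((⌊s * (N : ℝ)⌋₊ : ℝ) + 1) ≤ Real.sqrt n := Real.sqrt_le_sqrt hnMR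
    have hA : AA s N < (k:ℝ)/N - m := by
      have : Real.sqrt ((⌊s * (N : ℝ)⌋₊ : ℝ) + 1) - 1/(2*(N:ℝ)) < (k:ℝ)/N - m := by linarith
      exact lt_of_le_of_lt (min_le_right _ _) this
    exact hgood m ⟨hA, le_trans hyU (le_max_left _ _)⟩

lemma key (s : ℝ) (hs : 0 < s) (N k : ℕ) (hN : 4 ≤ N) (hM : 4 ≤ ⌊s * (N : ℝ)⌋₊)
    (hk1 : 1 ≤ k) (hkN : k < N)
    (hne : S N ((k : ℝ) / N) s ≠ Sed N (epsN N s) (deltaN N) ((k : ℝ) / N) s) :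
    ∃ m : ℤ, AA s N < (k : ℝ) / N - m ∧ (k : ℝ) / N - m ≤ BB s N := by
  by_contra h
  push_neg at h
  exact hne (by
    rw [Sed_eq s hs N k hN hM hk1 hkN, S_eq s hs N k hN hM hk1 hkN,
      TS_eq_TE s hs N k hN hM hk1 hkN (fun m hm => by
        obtain ⟨h1, h2⟩ := hm; exact absurd h2 (not_le.2 (h m h1)))])

lemma card_bad_le (s : ℝ) (hs : 0 < s) (N : ℕ) (hN : 4 ≤ N) (hM : 4 ≤ ⌊s * (N : ℝ)⌋₊) :
    (((Finset.Ico 1 N).filter (fun k : ℕ =>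
      S N ((k : ℝ) / N) s ≠ Sed N (epsN N s) (deltaN N) ((k : ℝ) / N) s)).card : ℝ) ≤
    (N : ℝ) * (BB s N - AA s N) + 1 := by
  classical
  have hN0 : 0 < N := by omega
  have hNR : (0:ℝ) < N := by exact_mod_cast hN0
  have hABle : AA s N ≤ BB s N :=
    le_trans (min_le_left _ _) (le_max_left _ _)
  set f : ℕ → ℤ := fun k =>
    if h : ∃ m : ℤ, AA s N < (k : ℝ) / N - m ∧ (k : ℝ) / N - m ≤ BB s N then
      (k : ℤ) - N * Classical.choose h
    else 0 with hf
  have hmaps : ∀ k ∈ (Finset.Ico 1 N).filter (fun k : ℕ =>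
      S N ((k : ℝ) / N) s ≠ Sed N (epsN N s) (deltaN N) ((k : ℝ) / N) s),
      f k ∈ Finset.Ioc ⌊(N:ℝ) * AA s N⌋ ⌊(N:ℝ) * BB s N⌋ := by
    intro k hk
    rw [Finset.mem_filter, Finset.mem_Ico] at hk
    obtain ⟨⟨hk1, hkN⟩, hne⟩ := hk
    have hex := key s hs N k hN hM hk1 hkN hne
    rw [hf]
    simp only [dif_pos hex]
    obtain ⟨hA, hB⟩ := Classical.choose_spec hex
    have he : (((k : ℤ) - N * Classical.choose hex : ℤ) : ℝ)
        = (N:ℝ) * ((k : ℝ) / N - Classical.choose hex) := by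
      push_cast
      field_simp
    rw [Finset.mem_Ioc]
    constructor
    · apply Int.floor_lt.2
      rw [he]
      exact mul_lt_mul_of_pos_left hA hNR
    · apply Int.le_floor.2
      rw [he]
      exact mul_le_mul_of_nonneg_left hB hNR.le
  have hinj : Set.InjOn f ((Finset.Ico 1 N).filter (fun k : ℕ =>
      S N ((k : ℝ) / N) s ≠ Sed N (epsN N s) (deltaN N) ((k : ℝ) / N) s)) := by
    intro k1 hk1 k2 hk2 heq
    rw [Finset.coe_filter, Set.mem_setOf_eq, Finset.mem_Ico] at hk1 hk2
    obtain ⟨⟨h11, h12⟩, h13⟩ := hk1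
    obtain ⟨⟨h21, h22⟩, h23⟩ := hk2
    have hex1 := key s hs N k1 hN hM h11 h12 h13
    have hex2 := key s hs N k2 hN hM h21 h22 h23
    rw [hf] at heq
    simp only [dif_pos hex1, dif_pos hex2] at heq
    have hdvd : (N : ℤ) ∣ (k1 : ℤ) - k2 :=
      ⟨Classical.choose hex1 - Classical.choose hex2, by linear_combination heq⟩
    have habs : |(k1 : ℤ) - k2| < N := abs_lt.mpr ⟨by omega, by omega⟩
    have := Int.eq_zero_of_abs_lt_dvd hdvd habs
    omega
  have hcard := Finset.card_le_card_of_injOn f hmaps hinj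
  have hIoc : (Finset.Ioc ⌊(N:ℝ) * AA s N⌋ ⌊(N:ℝ) * BB s N⌋).card
      = (⌊(N:ℝ) * BB s N⌋ - ⌊(N:ℝ) * AA s N⌋).toNat := Int.card_Ioc _ _
  have hcardR : ((((Finset.Ico 1 N).filter (fun k : ℕ =>
      S N ((k : ℝ) / N) s ≠ Sed N (epsN N s) (deltaN N) ((k : ℝ) / N) s)).card : ℝ))
      ≤ (((⌊(N:ℝ) * BB s N⌋ - ⌊(N:ℝ) * AA s N⌋).toNat : ℕ) : ℝ) := by
    rw [← hIoc]
    exact_mod_cast hcard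
  refine le_trans hcardR ?_
  rcases le_or_gt (⌊(N:ℝ) * BB s N⌋ - ⌊(N:ℝ) * AA s N⌋) 0 with hle | hlt
  · rw [Int.toNat_of_nonpos hle]
    have : (0:ℝ) ≤ (N:ℝ) * (BB s N - AA s N) :=
      mul_nonneg hNR.le (by linarith)
    norm_num
    linarith
  · have : (((⌊(N:ℝ) * BB s N⌋ - ⌊(N:ℝ) * AA s N⌋).toNat : ℕ) : ℝ)
        = ((⌊(N:ℝ) * BB s N⌋ : ℝ) - (⌊(N:ℝ) * AA s N⌋ : ℝ)) := by
      have h2 : (((⌊(N:ℝ) * BB s N⌋ - ⌊(N:ℝ) * AA s N⌋).toNat : ℤ) : ℝ)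
          = ((⌊(N:ℝ) * BB s N⌋ - ⌊(N:ℝ) * AA s N⌋ : ℤ) : ℝ) := by
        exact_mod_cast congrArg (fun z : ℤ => (z : ℝ)) (Int.toNat_of_nonneg hlt.le)
      push_cast at h2 ⊢
      linarith
    rw [this]
    have hb1 : ((⌊(N:ℝ) * BB s N⌋ : ℝ)) ≤ (N:ℝ) * BB s N := Int.floor_le _
    have hb2 : (N:ℝ) * AA s N - 1 < (⌊(N:ℝ) * AA s N⌋ : ℝ) := Int.sub_one_lt_floor _
    nlinarith [hb1, hb2]

lemma BB_sub_AA_le (s : ℝ) (hs : 0 < s) (N : ℕ) (hN : 4 ≤ N) (hM : 4 ≤ ⌊s * (N : ℝ)⌋₊) :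
    BB s N - AA s N ≤ 2 / Real.sqrt (⌊s * (N : ℝ)⌋₊ : ℝ) + 1 / (N : ℝ) := by
  have hN0 : 0 < N := by omega
  have hNR : (0:ℝ) < N := by exact_mod_cast hN0
  have hsN2 : (2:ℝ) ≤ Real.sqrt N := sqrtN_ge N hN
  have hsM2 : (2:ℝ) ≤ Real.sqrt (⌊s * (N : ℝ)⌋₊ : ℝ) := sqrtM_ge s N hM
  have hUle := UU_le s N hs hN hM
  have hUge := UU_ge s N hs hN hM
  have hD : 1 / (2 * Real.sqrt N * Real.sqrt (⌊s * (N : ℝ)⌋₊ : ℝ))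
      ≤ 1 / Real.sqrt (⌊s * (N : ℝ)⌋₊ : ℝ) := by
    apply one_div_le_one_div_of_le (by linarith)
    nlinarith
  have hBB : BB s N ≤ Real.sqrt (⌊s * (N : ℝ)⌋₊ : ℝ) + 1 / Real.sqrt (⌊s * (N : ℝ)⌋₊ : ℝ)
      + 1 / (2 * Real.sqrt N * Real.sqrt (⌊s * (N : ℝ)⌋₊ : ℝ)) + 1 / (2 * (N:ℝ)) := by
    apply max_le
    · have : (0:ℝ) < 1 / (2 * (N:ℝ)) := by positivity
      linarith
    · have h0 : (0:ℝ) < 1 / Real.sqrt (⌊s * (N : ℝ)⌋₊ : ℝ) := by positivity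
      have h0' : (0:ℝ) < 1 / (2 * Real.sqrt N * Real.sqrt (⌊s * (N : ℝ)⌋₊ : ℝ)) := by positivity
      linarith
  have hAA : Real.sqrt (⌊s * (N : ℝ)⌋₊ : ℝ) - 1 / (2 * (N:ℝ)) ≤ AA s N := by
    apply le_min
    · have : (0:ℝ) < 1 / (2 * (N:ℝ)) := by positivity
      linarith
    · have : Real.sqrt (⌊s * (N : ℝ)⌋₊ : ℝ) ≤ Real.sqrt ((⌊s * (N : ℝ)⌋₊ : ℝ) + 1) :=
        Real.sqrt_le_sqrt (by linarith)
      linarith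
  have hsum : 1 / (2 * (N:ℝ)) + 1 / (2 * (N:ℝ)) = 1 / (N:ℝ) := by
    rw [← add_div, div_eq_div_iff (by positivity) (by positivity)]
    ring
  have h2d : 1 / Real.sqrt (⌊s * (N : ℝ)⌋₊ : ℝ) + 1 / Real.sqrt (⌊s * (N : ℝ)⌋₊ : ℝ)
      = 2 / Real.sqrt (⌊s * (N : ℝ)⌋₊ : ℝ) := by ring
  linarith

lemma sqrt_tendsto_atTop : Filter.Tendsto Real.sqrt Filter.atTop Filter.atTop := by
  apply Filter.tendsto_atTop_atTop.2
  intro b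
  refine ⟨(max b 0)^2, fun a ha => ?_⟩
  calc b ≤ max b 0 := le_max_left _ _
    _ = Real.sqrt ((max b 0)^2) := (Real.sqrt_sq (le_max_right _ _)).symm
    _ ≤ Real.sqrt a := Real.sqrt_le_sqrt ha

theorem proportion_S_ne_Sed_tendsto_zero (s : ℝ) (hs : 0 < s) :
    Filter.Tendsto
      (fun N : ℕ =>
        (((Finset.Ico 1 N).filter (fun k : ℕ =>
          S N ((k : ℝ) / N) s ≠ Sed N (epsN N s) (deltaN N) ((k : ℝ) / N) s)).card : ℝ) / N)
      Filter.atTop (nhds 0) := by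
  have hfl : Filter.Tendsto (fun N : ℕ => ⌊s * (N:ℝ)⌋₊) Filter.atTop Filter.atTop := by
    apply tendsto_nat_floor_atTop.comp
    exact (tendsto_natCast_atTop_atTop (R := ℝ)).const_mul_atTop hs
  have hsqrtT : Filter.Tendsto (fun N : ℕ => Real.sqrt (⌊s * (N:ℝ)⌋₊ : ℝ))
      Filter.atTop Filter.atTop :=
    sqrt_tendsto_atTop.comp ((tendsto_natCast_atTop_atTop (R := ℝ)).comp hfl)
  have hg : Filter.Tendsto
      (fun N : ℕ => 2 / Real.sqrt (⌊s * (N:ℝ)⌋₊ : ℝ) + 2 / (N : ℝ))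
      Filter.atTop (nhds 0) := by
    have h1 : Filter.Tendsto (fun N : ℕ => 2 / Real.sqrt (⌊s * (N:ℝ)⌋₊ : ℝ))
        Filter.atTop (nhds 0) := by
      simp only [div_eq_mul_inv]
      have := hsqrtT.inv_tendsto_atTop
      have h2 := this.const_mul (2:ℝ)
      simpa using h2
    have h2 := tendsto_const_div_atTop_nhds_zero_nat (2:ℝ)
    simpa using h1.add h2
  apply squeeze_zero' ?_ ?_ hg
  · filter_upwards with N
    positivity
  · filter_upwards [Filter.eventually_ge_atTop 4, hfl.eventually (Filter.eventually_ge_atTop 4)]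
      with N hN hM
    have hN0 : 0 < N := by omega
    have hNR : (0:ℝ) < N := by exact_mod_cast hN0
    have hsM2 : (2:ℝ) ≤ Real.sqrt (⌊s * (N : ℝ)⌋₊ : ℝ) := sqrtM_ge s N hM
    have h1 := card_bad_le s hs N hN hM
    have h2 := BB_sub_AA_le s hs N hN hM
    have h3 : (N : ℝ) * (BB s N - AA s N) + 1
        ≤ (N:ℝ) * (2 / Real.sqrt (⌊s * (N : ℝ)⌋₊ : ℝ) + 1 / (N : ℝ)) + 1 := by
      have := mul_le_mul_of_nonneg_left h2 hNR.le
      linarith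
    have h4 : ((N:ℝ) * (2 / Real.sqrt (⌊s * (N : ℝ)⌋₊ : ℝ) + 1 / (N : ℝ)) + 1) / (N:ℝ)
        = 2 / Real.sqrt (⌊s * (N : ℝ)⌋₊ : ℝ) + 2 / (N : ℝ) := by
      field_simp
      ring
    calc (((Finset.Ico 1 N).filter (fun k : ℕ =>
          S N ((k : ℝ) / N) s ≠ Sed N (epsN N s) (deltaN N) ((k : ℝ) / N) s)).card : ℝ) / N
        ≤ ((N : ℝ) * (BB s N - AA s N) + 1) / N := (div_le_div_iff_of_pos_right hNR).2 h1
      _ ≤ ((N:ℝ) * (2 / Real.sqrt (⌊s * (N : ℝ)⌋₊ : ℝ) + 1 / (N : ℝ)) + 1) / (N:ℝ) :=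
          (div_le_div_iff_of_pos_right hNR).2 h3
      _ = _ := h4
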